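/- Let L ≥ 2 and let G be a g.e.c. graph with unit threshold on a dense subset S of ℝ/Lℤ. If u, v ∈ S satisfy d(u,v) ≥ 1, then the graph distance between u and v in G equals ⌊d(u,v)⌋ + 1. -/

import Mathlib

/-- Geometric existential closure for a graph on a subset `S` of the circle. -/
def IsGEC {L : ℝ} {S : Set (AddCircle L)} (G : SimpleGraph S) : Prop :=
  ∀ (s : S) (A B : Finset S), Disjoint A B →
    (∀ a ∈ A, dist (a : AddCircle L) (s : AddCircle L) < 1) →
    (∀ b ∈ B, dist (b : AddCircle L) (s : AddCircle L) < 1) →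
    ∀ ε : ℝ, 0 < ε →
      ∃ v : S, v ∉ A ∧ v ∉ B ∧ (∀ a ∈ A, G.Adj v a) ∧ (∀ b ∈ B, ¬ G.Adj v b) ∧
        dist (v : AddCircle L) (s : AddCircle L) < ε

/-- Adjacent vertices are at circle distance less than 1. -/
def HasUnitThreshold {L : ℝ} {S : Set (AddCircle L)} (G : SimpleGraph S) : Prop :=
  ∀ u v : S, G.Adj u v → dist (u : AddCircle L) (v : AddCircle L) < 1

lemma lift_exists (L : ℝ) (z : AddCircle L) : ∃ r : ℝ, (r : AddCircle L) = z ∧ |r| = ‖z‖ := by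
  obtain ⟨x, rfl⟩ := QuotientAddGroup.mk_surjective z
  refine ⟨x - round (L⁻¹ * x) * L, ?_, ?_⟩
  · have h : ((round (L⁻¹ * x) * L : ℝ) : AddCircle L) = 0 := by
      rw [AddCircle.coe_eq_zero_iff]
      exact ⟨round (L⁻¹ * x), by rw [zsmul_eq_mul]⟩
    rw [AddCircle.coe_sub, h, sub_zero]
  · rw [AddCircle.norm_eq]

lemma dist_shift (L : ℝ) (z : AddCircle L) (a b : ℝ) :
    dist (z + (a : ℝ) : AddCircle L) (z + (b : ℝ)) ≤ |a - b| := by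
  rw [dist_eq_norm, add_sub_add_left_eq_sub, ← AddCircle.coe_sub, ← Real.norm_eq_abs]
  exact QuotientAddGroup.norm_mk_le_norm

lemma walk_dist_le {L : ℝ} {S : Set (AddCircle L)} {G : SimpleGraph S}
    (hut : HasUnitThreshold G) {a b : S} (w : G.Walk a b) :
    dist (a : AddCircle L) (b : AddCircle L) ≤ w.length := by
  induction w with
  | nil => simp
  | @cons x y z h p ih =>
    have h1 := hut _ _ h
    have h2 : dist (x : AddCircle L) (z : AddCircle L)
        ≤ dist (x : AddCircle L) (y : AddCircle L) + dist (y : AddCircle L) (z : AddCircle L) :=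
      dist_triangle _ _ _
    rw [SimpleGraph.Walk.length_cons]
    push_cast
    linarith

lemma walk_dist_lt {L : ℝ} {S : Set (AddCircle L)} {G : SimpleGraph S}
    (hut : HasUnitThreshold G) {a b : S} (hab : a ≠ b) (w : G.Walk a b) :
    dist (a : AddCircle L) (b : AddCircle L) < w.length := by
  cases w with
  | nil => exact absurd rfl hab
  | @cons _ c _ h p =>
    have h1 := hut _ _ h
    have h2 := walk_dist_le hut p
    have h3 : dist (a : AddCircle L) (b : AddCircle L)
        ≤ dist (a : AddCircle L) (c : AddCircle L) + dist (c : AddCircle L) (b : AddCircle L) :=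
      dist_triangle _ _ _
    rw [SimpleGraph.Walk.length_cons]
    push_cast
    linarith

theorem stmt_7 (L : ℝ) (hL : 2 ≤ L) (S : Set (AddCircle L)) (hSdense : Dense S)
    (hScount : S.Countable)
    (G : SimpleGraph S) (hgec : IsGEC G) (hut : HasUnitThreshold G)
    (u v : S) (huv : 1 ≤ dist (u : AddCircle L) (v : AddCircle L)) :
    G.edist u v = (⌊dist (u : AddCircle L) (v : AddCircle L)⌋₊ : ℕ∞) + 1 := by
  set d : ℝ := dist (u : AddCircle L) (v : AddCircle L) with hd
  set n : ℕ := ⌊d⌋₊ + 1 with hn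
  have hd0 : (0:ℝ) < d := lt_of_lt_of_le one_pos huv
  have hdn : d < n := by
    rw [hn]; push_cast; exact Nat.lt_floor_add_one d
  have hn2 : 2 ≤ n := by
    have : 1 ≤ ⌊d⌋₊ := Nat.le_floor (by exact_mod_cast huv)
    omega
  have hnpos : (0:ℝ) < n := by positivity
  have hδ1 : d / n < 1 := (div_lt_one hnpos).mpr hdn
  have hδ0 : 0 < d / n := div_pos hd0 hnpos
  obtain ⟨r, hr, hra⟩ := lift_exists L ((v : AddCircle L) - u)
  have hrd : |r| = d := by
    rw [hra, ← dist_eq_norm, dist_comm]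
  set p : ℕ → AddCircle L := fun i => (u : AddCircle L) + ((i : ℝ) * (r / n) : ℝ) with hp
  have hp0 : p 0 = u := by simp [hp]
  have hpn : p n = v := by
    have hne : (n:ℝ) ≠ 0 := ne_of_gt hnpos
    have : ((n:ℝ) * (r / n)) = r := by field_simp
    simp only [hp, this, hr]
    abel
  have hstep : ∀ i : ℕ, dist (p i) (p (i+1)) ≤ d / n := by
    intro i
    have hle := dist_shift L u ((i:ℝ) * (r/n)) (((i+1:ℕ):ℝ) * (r/n))
    refine le_trans hle ?_
    have he : ((i:ℝ) * (r/n)) - ((i+1:ℕ):ℝ) * (r/n) = -(r/n) := by push_cast; ring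
    rw [he, abs_neg, abs_div, hrd, abs_of_pos hnpos]
  obtain ⟨ε, hε0, hεe⟩ : ∃ ε : ℝ, 0 < ε ∧ ε = (1 - d / n) / 4 := ⟨_, by linarith, rfl⟩
  have hdense : ∀ x : AddCircle L, ∃ s : S, dist (s : AddCircle L) x < ε := by
    intro x
    obtain ⟨y, hy1, hy2⟩ := Metric.dense_iff.mp hSdense x ε hε0
    exact ⟨⟨y, hy2⟩, by simpa [dist_comm] using hy1⟩
  have claim : ∀ i : ℕ, i + 2 ≤ n →
      ∃ x : S, (∃ w : G.Walk u x, w.length = i) ∧ dist (x : AddCircle L) (p i) < 2 * ε := by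
    intro i
    induction i with
    | zero =>
      intro _
      refine ⟨u, ⟨SimpleGraph.Walk.nil, rfl⟩, ?_⟩
      rw [hp0, dist_self]
      linarith
    | succ i ih =>
      intro hi
      obtain ⟨x, ⟨w, hw⟩, hx⟩ := ih (by omega)
      obtain ⟨s, hs⟩ := hdense (p (i+1))
      have hxs : dist (x : AddCircle L) (s : AddCircle L) < 1 := by
        have t1 : dist (x : AddCircle L) (s : AddCircle L)
            ≤ dist (x : AddCircle L) (p i) + dist (p i) (p (i+1))
              + dist (p (i+1)) (s : AddCircle L) := dist_triangle4 _ _ _ _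
        have h2 := hstep i
        rw [dist_comm (p (i+1))] at t1
        linarith
      obtain ⟨y, _, _, hadj, _, hys⟩ := hgec s {x} ∅ (Finset.disjoint_empty_right _)
        (by simpa using hxs) (by simp) ε hε0
      refine ⟨y, ⟨w.concat (hadj x (Finset.mem_singleton_self x)).symm, by
        rw [SimpleGraph.Walk.length_concat, hw]⟩, ?_⟩
      have := dist_triangle (y : AddCircle L) (s : AddCircle L) (p (i+1))
      linarith
  obtain ⟨x, ⟨w, hw⟩, hx⟩ := claim (n - 2) (by omega)
  obtain ⟨s, hs⟩ := hdense (p (n-1))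
  have hkey1 : (n - 2) + 1 = n - 1 := by omega
  have hkey2 : (n - 1) + 1 = n := by omega
  have hxs : dist (x : AddCircle L) (s : AddCircle L) < 1 := by
    have t1 : dist (x : AddCircle L) (s : AddCircle L)
        ≤ dist (x : AddCircle L) (p (n-2)) + dist (p (n-2)) (p (n-1))
          + dist (p (n-1)) (s : AddCircle L) := dist_triangle4 _ _ _ _
    have h2 := hstep (n-2)
    rw [hkey1] at h2
    rw [dist_comm (p (n-1))] at t1
    linarith
  have hvs : dist (v : AddCircle L) (s : AddCircle L) < 1 := by
    have t1 : dist (v : AddCircle L) (s : AddCircle L)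
        ≤ dist (v : AddCircle L) (p (n-1)) + dist (p (n-1)) (s : AddCircle L) :=
      dist_triangle _ _ _
    have h2 := hstep (n-1)
    rw [hkey2, hpn] at h2
    rw [dist_comm ((v : AddCircle L)) (p (n-1)), dist_comm (p (n-1)) ((s : AddCircle L))] at t1
    linarith
  obtain ⟨y, _, _, hadj, _, hys⟩ := hgec s {x, v} ∅ (Finset.disjoint_empty_right _)
    (by
      intro a ha
      rcases Finset.mem_insert.mp ha with h | h
      · rw [h]; exact hxs
      · rw [Finset.mem_singleton.mp h]; exact hvs) (by simp) ε hε0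
  have hyx : G.Adj y x := hadj x (by simp)
  have hyv : G.Adj y v := hadj v (by simp)
  have hub : G.edist u v ≤ (n : ℕ∞) := by
    have h := G.edist_le ((w.concat hyx.symm).concat hyv)
    rw [SimpleGraph.Walk.length_concat, SimpleGraph.Walk.length_concat, hw] at h
    refine le_trans h ?_
    norm_cast
    omega
  have hne : u ≠ v := by
    intro h
    have : d = 0 := by rw [hd, h, dist_self]
    linarith
  have hlb : (n : ℕ∞) ≤ G.edist u v := by
    have htop : G.edist u v ≠ ⊤ := by
      intro h
      rw [h] at hub
      exact absurd (top_le_iff.mp hub) (by simp)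
    obtain ⟨q, hq⟩ := G.exists_walk_of_edist_ne_top htop
    have hdlt : d < q.length := walk_dist_lt hut hne q
    have hfl : ⌊d⌋₊ < q.length := by
      have : (⌊d⌋₊ : ℝ) ≤ d := Nat.floor_le hd0.le
      exact_mod_cast lt_of_le_of_lt this hdlt
    have hnq : n ≤ q.length := by omega
    rw [← hq]
    exact_mod_cast hnq
  have hfin : G.edist u v = (n : ℕ∞) := le_antisymm hub hlb
  rw [hfin, hn]
  push_cast
  rfl
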